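/- For every nonempty admissible composition s = (s_1, …, s_r) (with s_1 ≥ 2), the Hurwitz multizeta function He^{s} is not a rational function: there is no rational function G with complex coefficients such that He^{s}(z) = G(z) for all z ∈ ℂ outside the negative integers and outside the poles of G. -/

import Mathlib

/-- Membership in the domain `Ω = ℂ ∖ {-1, -2, -3, …}`. -/
def InOmega (z : ℂ) : Prop := ∀ k : ℕ, z ≠ -((k : ℂ) + 1)

/-- The Hurwitz multizeta function `He^{s₁,…,s_r}(z) = ∑_{0 < n_r < ⋯ < n₁} ∏ 1/(n_i+z)^{s_i}`,
indexed by strictly decreasing tuples of positive integers. For `s = []` this is the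
constant function `1`. -/
noncomputable def He (s : List ℕ) (z : ℂ) : ℂ :=
  ∑' n : {n : Fin s.length → ℕ // StrictAnti n ∧ ∀ i, 0 < n i},
    ∏ i, 1 / (((n.1 i : ℂ) + z) ^ s.get i)

/-- A composition `s = (s₁, …, s_r)` is admissible if all parts are positive and
the first part (if any) is at least 2. -/
def Admissible (s : List ℕ) : Prop :=
  (∀ k ∈ s, 1 ≤ k) ∧ ∀ k ∈ s.head?, 2 ≤ k

open Filter Polynomial Finset

noncomputable def He' (r : ℕ) (c : Fin r → ℕ) (z : ℂ) : ℂ :=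
  ∑' n : {n : Fin r → ℕ // StrictAnti n ∧ ∀ i, 0 < n i},
    ∏ i, 1 / (((n.1 i : ℂ) + z) ^ c i)

lemma summable_pi_rpow (k : ℕ) (p : ℝ) (hp : p < -1) :
    Summable (fun n : Fin k → ℕ => ∏ i, (n i : ℝ) ^ p) := by
  induction k with
  | zero => exact .of_finite
  | succ k ih =>
    have base : Summable (fun n : ℕ => (n : ℝ) ^ p) := Real.summable_nat_rpow.2 hp
    have h := (base.mul_of_nonneg ih (fun n => Real.rpow_nonneg (Nat.cast_nonneg n) p)
      (fun n => Finset.prod_nonneg fun i _ => Real.rpow_nonneg (Nat.cast_nonneg _) p))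
    have := h.comp_injective (Fin.consEquiv (fun _ : Fin (k+1) => ℕ)).symm.injective
    refine this.congr fun n => ?_
    simp [Fin.prod_univ_succ, Fin.consEquiv, Fin.tail]

lemma nat_prod_le (r : ℕ) (c : Fin (r+1) → ℕ) (h1 : ∀ i, 1 ≤ c i) (h2 : 2 ≤ c 0)
    (n : Fin (r+1) → ℕ) (hpos : ∀ i, 0 < n i) :
    n 0 * ∏ i, n i ≤ ∏ i, n i ^ c i := by
  calc n 0 * ∏ i, n i = ∏ i, ((if i = 0 then n i else 1) * n i) := by
        rw [Finset.prod_mul_distrib, Finset.prod_ite_eq']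
        simp
    _ ≤ ∏ i, n i ^ c i := by
        apply Finset.prod_le_prod'
        intro i _
        by_cases hi : i = 0
        · subst hi
          simp only [if_pos rfl]
          calc n 0 * n 0 = n 0 ^ 2 := (sq (n 0)).symm
            _ ≤ n 0 ^ c 0 := Nat.pow_le_pow_right (hpos 0) h2
        · simp only [if_neg hi, one_mul]
          calc n i = n i ^ 1 := (pow_one _).symm
            _ ≤ n i ^ c i := Nat.pow_le_pow_right (hpos i) (h1 i)

lemma rpow_prod_le (r : ℕ) (c : Fin (r+1) → ℕ) (h1 : ∀ i, 1 ≤ c i) (h2 : 2 ≤ c 0)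
    (n : Fin (r+1) → ℕ) (hn : StrictAnti n) (hpos : ∀ i, 0 < n i) :
    ∏ i, (n i : ℝ) ^ ((1 : ℝ) + 1/(r+1)) ≤ ∏ i, (n i : ℝ) ^ (c i) := by
  have hb : ∀ i, (1:ℝ) ≤ (n i : ℝ) := fun i => by exact_mod_cast hpos i
  have hb0 : ∀ i, (0:ℝ) ≤ (n i : ℝ) := fun i => by positivity
  have key : ∏ i, (n i : ℝ) ^ ((1 : ℝ) + 1/(r+1)) ≤ (n 0 : ℝ) * ∏ i, (n i : ℝ) := by
    have h1' : ∀ i, (n i : ℝ) ^ ((1 : ℝ) + 1/(r+1)) =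
        (n i : ℝ) * (n i : ℝ) ^ ((1:ℝ)/(r+1)) := by
      intro i
      rw [Real.rpow_add (by exact_mod_cast hpos i), Real.rpow_one]
    calc ∏ i, (n i : ℝ) ^ ((1 : ℝ) + 1/(r+1))
        = (∏ i, (n i : ℝ)) * ∏ i, (n i : ℝ) ^ ((1:ℝ)/(r+1)) := by
          rw [← Finset.prod_mul_distrib]; exact Finset.prod_congr rfl fun i _ => h1' i
      _ ≤ (∏ i, (n i : ℝ)) * ∏ _i : Fin (r+1), (n 0 : ℝ) ^ ((1:ℝ)/(r+1)) := by
          apply mul_le_mul_of_nonneg_left _ (Finset.prod_nonneg fun i _ => hb0 i)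
          apply Finset.prod_le_prod (fun i _ => Real.rpow_nonneg (hb0 i) _)
          intro i _
          apply Real.rpow_le_rpow (hb0 i) _ (by positivity)
          exact_mod_cast hn.antitone (Fin.zero_le i)
      _ = (∏ i, (n i : ℝ)) * (n 0 : ℝ) := by
          rw [Finset.prod_const, ← Real.rpow_natCast ((n 0 : ℝ) ^ ((1:ℝ)/(r+1))),
            ← Real.rpow_mul (hb0 0)]
          have : (1:ℝ) / (r+1) * (#(Finset.univ : Finset (Fin (r+1))) : ℕ) = 1 := by
            simp [Finset.card_univ]
            rw [inv_mul_cancel₀ (by positivity : (r:ℝ)+1 ≠ 0)]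
          rw [this, Real.rpow_one]
      _ = (n 0 : ℝ) * ∏ i, (n i : ℝ) := mul_comm _ _
  refine key.trans ?_
  have := nat_prod_le r c h1 h2 n hpos
  calc (n 0 : ℝ) * ∏ i, (n i : ℝ) = ((n 0 * ∏ i, n i : ℕ) : ℝ) := by push_cast; ring
    _ ≤ ((∏ i, n i ^ c i : ℕ) : ℝ) := by exact_mod_cast this
    _ = ∏ i, (n i : ℝ) ^ (c i) := by push_cast; rfl

lemma He'_norm_term (r : ℕ) (c : Fin r → ℕ) (x : ℝ) (hx : 0 ≤ x)
    (n : Fin r → ℕ) (hpos : ∀ i, 0 < n i) :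
    ‖∏ i, 1 / (((n i : ℂ) + (x:ℂ)) ^ c i)‖ = ∏ i, 1 / (((n i : ℝ) + x) ^ c i) := by
  rw [norm_prod]
  refine Finset.prod_congr rfl fun i _ => ?_
  have : ((n i : ℂ) + (x:ℂ)) = (((n i : ℝ) + x : ℝ) : ℂ) := by push_cast; ring
  rw [this, norm_div, norm_one, norm_pow, Complex.norm_real,
    Real.norm_of_nonneg (by positivity)]

lemma He'_summable (r : ℕ) (c : Fin (r+1) → ℕ) (h1 : ∀ i, 1 ≤ c i) (h2 : 2 ≤ c 0)
    (x : ℝ) (hx : 0 ≤ x) :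
    Summable (fun n : {n : Fin (r+1) → ℕ // StrictAnti n ∧ ∀ i, 0 < n i} =>
      ∏ i, 1 / (((n.1 i : ℂ) + (x:ℂ)) ^ c i)) := by
  have hp : (-(1 + 1/((r:ℝ)+1))) < -1 := by
    rw [neg_lt_neg_iff]
    have : 0 < 1/((r:ℝ)+1) := by positivity
    linarith
  have hg : Summable (fun n : {n : Fin (r+1) → ℕ // StrictAnti n ∧ ∀ i, 0 < n i} =>
      ∏ i, (n.1 i : ℝ) ^ (-(1 + 1/((r:ℝ)+1)))) :=
    (summable_pi_rpow (r+1) _ hp).subtype _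
  apply Summable.of_norm_bounded hg
  rintro ⟨n, hn, hpos⟩
  rw [He'_norm_term (r+1) c x hx n hpos]
  have hb : ∀ i, (0:ℝ) < (n i : ℝ) := fun i => by exact_mod_cast hpos i
  calc ∏ i, 1 / (((n i : ℝ) + x) ^ c i) ≤ ∏ i, 1 / ((n i : ℝ) ^ c i) := by
        apply Finset.prod_le_prod (fun i _ => by positivity)
        intro i _
        apply one_div_le_one_div_of_le (pow_pos (hb i) _)
        exact pow_le_pow_left₀ (le_of_lt (hb i)) (by linarith [hb i]) _
    _ = (∏ i, (n i : ℝ) ^ c i)⁻¹ := by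
        rw [← Finset.prod_inv_distrib]
        exact Finset.prod_congr rfl fun i _ => one_div _
    _ ≤ (∏ i, (n i : ℝ) ^ ((1:ℝ) + 1/((r:ℝ)+1)))⁻¹ := by
        apply inv_anti₀
        · exact Finset.prod_pos fun i _ => Real.rpow_pos_of_pos (hb i) _
        · exact_mod_cast rpow_prod_le r c h1 h2 n hn hpos
    _ = ∏ i, (n i : ℝ) ^ (-(1 + 1/((r:ℝ)+1))) := by
        rw [← Finset.prod_inv_distrib]
        exact Finset.prod_congr rfl fun i _ => (Real.rpow_neg (hb i).le _).symm

lemma He'_zero_eq (c : Fin 0 → ℕ) (z : ℂ) : He' 0 c z = 1 := by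
  have e0 : {n : Fin 0 → ℕ // StrictAnti n ∧ ∀ i, 0 < n i} :=
    ⟨fun i => i.elim0, ⟨fun a _ _ => a.elim0, fun i => i.elim0⟩⟩
  have : He' 0 c z = ∏ i : Fin 0, 1 / (((e0.1 i : ℂ) + z) ^ c i) := by
    apply tsum_eq_single e0
    intro b hb
    exact absurd (Subtype.ext (_root_.funext fun i => Fin.elim0 i)) hb
  rw [this]
  simp

lemma He'_FE (r : ℕ) (c : Fin (r+1) → ℕ) (h1 : ∀ i, 1 ≤ c i) (h2 : 2 ≤ c 0)
    (x : ℝ) (hx : 0 ≤ x) :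
    He' (r+1) c (x:ℂ) = He' (r+1) c ((x:ℂ)+1) +
      He' r (fun i => c i.castSucc) ((x:ℂ)+1) * (1 / ((x:ℂ)+1) ^ (c (Fin.last r))) := by
  classical
  set z : ℂ := (x:ℂ) with hz
  set T := {n : Fin (r+1) → ℕ // StrictAnti n ∧ ∀ i, 0 < n i} with hT
  set S := {m : Fin (r+1) → ℕ // StrictAnti m} with hS
  set f : S → ℂ := fun m => ∏ i, 1 / (((m.1 i : ℂ) + (z+1)) ^ c i) with hf
  -- the equiv subtracting 1
  have anti_sub : ∀ n : T, StrictAnti (fun i => n.1 i - 1) := by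
    rintro ⟨n, hn, hp⟩ a b hab
    have := hn hab
    have := hp b
    simp only
    omega
  have anti_add : ∀ m : S, StrictAnti (fun i => m.1 i + 1) := by
    rintro ⟨m, hm⟩ a b hab
    have := hm hab
    simp only
    omega
  let e : T ≃ S :=
    { toFun := fun n => ⟨fun i => n.1 i - 1, anti_sub n⟩
      invFun := fun m => ⟨fun i => m.1 i + 1, anti_add m, fun i => Nat.succ_pos _⟩
      left_inv := by
        rintro ⟨n, hn, hp⟩
        apply Subtype.ext
        funext i
        have := hp i
        simp only
        omega
      right_inv := by
        rintro ⟨m, hm⟩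
        apply Subtype.ext
        funext i
        simp only
        omega }
  have step1 : He' (r+1) c z = ∑' m : S, f m := by
    rw [← Equiv.tsum_eq e f]
    apply tsum_congr
    rintro ⟨n, hn, hp⟩
    apply Finset.prod_congr rfl
    intro i _
    congr 2
    have := hp i
    have hcast : ((n i - 1 : ℕ) : ℂ) = (n i : ℂ) - 1 := by
      have : (1:ℕ) ≤ n i := hp i
      push_cast [Nat.cast_sub this]
      ring
    simp only [e, Equiv.coe_fn_mk]
    rw [hcast]
    ring
  have hsumT : Summable (fun n : T => ∏ i, 1 / (((n.1 i : ℂ) + z) ^ c i)) :=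
    He'_summable r c h1 h2 x hx
  have hsumf : Summable f := by
    rw [← Equiv.summable_iff e]
    apply hsumT.congr
    rintro ⟨n, hn, hp⟩
    apply Finset.prod_congr rfl
    intro i _
    congr 2
    have hcast : ((n i - 1 : ℕ) : ℂ) = (n i : ℂ) - 1 := by
      have : (1:ℕ) ≤ n i := hp i
      push_cast [Nat.cast_sub this]
      ring
    simp only [e, Equiv.coe_fn_mk]
    rw [hcast]
    ring
  set s : Set S := {m | 0 < m.1 (Fin.last r)} with hs
  have split : ∑' m : S, f m = ∑' m : s, f m + ∑' m : ↥sᶜ, f m :=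
    (hsumf.tsum_subtype_add_tsum_subtype_compl s).symm
  -- first part
  let e2 : s ≃ T :=
    { toFun := fun m => ⟨m.1.1, m.1.2, fun i =>
        lt_of_lt_of_le m.2 (m.1.2.antitone (Fin.le_last i))⟩
      invFun := fun n => ⟨⟨n.1, n.2.1⟩, n.2.2 (Fin.last r)⟩
      left_inv := fun m => rfl
      right_inv := fun n => rfl }
  have part1 : ∑' m : s, f m = He' (r+1) c (z+1) := by
    rw [He']
    rw [← Equiv.tsum_eq e2 (fun n : T => ∏ i, 1 / (((n.1 i : ℂ) + (z+1)) ^ c i))]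
    apply tsum_congr
    intro m
    rfl
  -- second part
  have snoc_anti : ∀ n : {n : Fin r → ℕ // StrictAnti n ∧ ∀ i, 0 < n i},
      StrictAnti (Fin.snoc n.1 0 : Fin (r+1) → ℕ) := by
    intro n a b hab
    rcases Fin.eq_castSucc_or_eq_last b with ⟨b', rfl⟩ | rfl
    · have ha : a ≠ Fin.last r :=
        ne_of_lt (lt_of_lt_of_le hab (Fin.castSucc_lt_last b').le)
      obtain ⟨a', rfl⟩ := Fin.exists_castSucc_eq.2 ha
      rw [Fin.snoc_castSucc, Fin.snoc_castSucc]
      exact n.2.1 (Fin.castSucc_lt_castSucc_iff.1 hab)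
    · rw [Fin.snoc_last]
      have ha : a ≠ Fin.last r := ne_of_lt hab
      obtain ⟨a', rfl⟩ := Fin.exists_castSucc_eq.2 ha
      rw [Fin.snoc_castSucc]
      exact n.2.2 a'
  let e3 : {n : Fin r → ℕ // StrictAnti n ∧ ∀ i, 0 < n i} ≃ (↥sᶜ) :=
    { toFun := fun n => ⟨⟨Fin.snoc n.1 0, snoc_anti n⟩, by
        show ¬ (0 : ℕ) < (Fin.snoc n.1 0 : Fin (r+1) → ℕ) (Fin.last r)
        rw [Fin.snoc_last]
        exact lt_irrefl 0⟩
      invFun := fun m => ⟨fun i => m.1.1 i.castSucc,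
        fun a b hab => m.1.2 (Fin.castSucc_lt_castSucc_iff.2 hab),
        fun i => by
          have hlt := m.1.2 (Fin.castSucc_lt_last i)
          exact Nat.lt_of_le_of_lt (Nat.zero_le _) hlt⟩
      left_inv := by
        intro n
        apply Subtype.ext
        funext i
        show (Fin.snoc n.1 0 : Fin (r+1) → ℕ) i.castSucc = n.1 i
        rw [Fin.snoc_castSucc]
      right_inv := by
        intro m
        apply Subtype.ext
        apply Subtype.ext
        funext i
        show (Fin.snoc (fun j => m.1.1 j.castSucc) 0 : Fin (r+1) → ℕ) i = m.1.1 i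
        rcases Fin.eq_castSucc_or_eq_last i with ⟨i', rfl⟩ | rfl
        · rw [Fin.snoc_castSucc]
        · rw [Fin.snoc_last]
          have hm' : ¬ (0:ℕ) < m.1.1 (Fin.last r) := m.2
          omega }
  have part2 : ∑' m : ↥sᶜ, f m =
      He' r (fun i => c i.castSucc) (z+1) * (1 / (z+1) ^ (c (Fin.last r))) := by
    rw [He', ← tsum_mul_right]
    rw [← Equiv.tsum_eq e3 (fun m : ↥sᶜ => f m)]
    apply tsum_congr
    intro n
    show f ((e3 n) : S) = _
    have hstep : f ((e3 n) : S) =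
        ∏ i : Fin (r+1), 1 / ((((Fin.snoc n.1 0 : Fin (r+1) → ℕ) i : ℕ) : ℂ) + (z+1)) ^ c i :=
      rfl
    rw [hstep, Fin.prod_univ_castSucc]
    congr 1
    · apply Finset.prod_congr rfl
      intro i _
      rw [Fin.snoc_castSucc]
    · rw [Fin.snoc_last]
      push_cast
      rw [zero_add]
  rw [step1, split, part1, part2]

lemma eventually_eval_ne_zero (Q : Polynomial ℂ) (hQ : Q ≠ 0) :
    ∀ᶠ x : ℝ in atTop, Q.eval (x:ℂ) ≠ 0 := by
  have hfin : Set.Finite {x : ℝ | Q.eval (x:ℂ) = 0} := by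
    have : Set.Finite {z : ℂ | Q.IsRoot z} := Polynomial.finite_setOf_isRoot hQ
    apply Set.Finite.preimage (f := fun x : ℝ => (x:ℂ)) _ this
    exact Set.injOn_of_injective (fun a b h => by exact_mod_cast h)
  obtain ⟨M, hM⟩ := hfin.bddAbove
  filter_upwards [eventually_gt_atTop M] with x hx h
  exact absurd (hM h) (not_le.2 hx)

lemma poly_eq_of_eventually {A B : Polynomial ℂ}
    (h : ∀ᶠ x : ℝ in atTop, A.eval (x:ℂ) = B.eval (x:ℂ)) : A = B := by
  obtain ⟨M, hM⟩ := eventually_atTop.1 h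
  have hroot : {z : ℂ | (A - B).IsRoot z}.Infinite := by
    apply Set.Infinite.mono (s := (fun x : ℝ => (x:ℂ)) '' Set.Ici M)
    · rintro _ ⟨x, hx, rfl⟩
      simp [Polynomial.IsRoot, Polynomial.eval_sub, hM x hx]
    · exact Set.Infinite.image
        (Set.injOn_of_injective (fun a b h => by exact_mod_cast h)) (Set.Ici_infinite M)
  have := Polynomial.eq_zero_of_infinite_isRoot _ hroot
  linear_combination (norm := ring_nf) this

lemma no_translation_identity (k : ℕ) (hk : 2 ≤ k) (P Q : Polynomial ℂ) (hQ : Q ≠ 0)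
    (hco : IsCoprime P Q)
    (hid : (P * Q.comp (X + C 1) - P.comp (X + C 1) * Q) * (X + C 1) ^ k
      = Q * Q.comp (X + C 1)) : False := by
  classical
  set Q₁ := Q.comp (X + C 1) with hQ₁def
  set P₁ := P.comp (X + C 1) with hP₁def
  set D := P * Q₁ - P₁ * Q with hDdef
  have hQ₁ : Q₁ ≠ 0 := fun h => hQ (by
    apply Polynomial.funext
    intro w
    have := congrArg (Polynomial.eval (w - 1)) h
    rw [hQ₁def, Polynomial.eval_comp] at this
    simpa using this)
  have evalQ₁ : ∀ w : ℂ, Q₁.eval w = Q.eval (w + 1) := by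
    intro w; simp [hQ₁def, Polynomial.eval_comp]
  have evalP₁ : ∀ w : ℂ, P₁.eval w = P.eval (w + 1) := by
    intro w; simp [hP₁def, Polynomial.eval_comp]
  have hnocommon : ∀ w : ℂ, Q.eval w = 0 → P.eval w ≠ 0 := by
    obtain ⟨u, v, huv⟩ := hco
    intro w hw hp
    have := congrArg (Polynomial.eval w) huv
    simp [hw, hp] at this
  have hD : D ≠ 0 := by
    intro h
    rw [h, zero_mul] at hid
    exact mul_ne_zero hQ hQ₁ hid.symm
  -- Q is nonconstant
  have hdegQ : 0 < Q.natDegree := by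
    by_contra hdeg
    push_neg at hdeg
    have hQ1deg : Q₁.natDegree = 0 := by
      rw [hQ₁def, Polynomial.natDegree_comp]
      simp [Nat.le_zero.1 hdeg]
    have h1 : (D * (X + C 1) ^ k).natDegree = D.natDegree + k := by
      rw [Polynomial.natDegree_mul hD (pow_ne_zero _ (Polynomial.X_add_C_ne_zero 1)),
        Polynomial.natDegree_pow, Polynomial.natDegree_X_add_C, mul_one]
    have h2 : (Q * Q₁).natDegree = 0 := by
      rw [Polynomial.natDegree_mul hQ hQ₁, hQ1deg, Nat.le_zero.1 hdeg]
    rw [hid, h2] at h1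
    omega
  -- roots
  have hroots : Q.roots.toFinset.Nonempty := by
    obtain ⟨z, hz⟩ := Complex.exists_root (Polynomial.natDegree_pos_iff_degree_pos.1 hdegQ)
    exact ⟨z, Multiset.mem_toFinset.2 ((Polynomial.mem_roots hQ).2 hz)⟩
  obtain ⟨β, hβmem, hβmax⟩ := Finset.exists_max_image Q.roots.toFinset Complex.re hroots
  obtain ⟨γ, hγmem, hγmin⟩ := Finset.exists_min_image Q.roots.toFinset Complex.re hroots
  have hmem_iff : ∀ w : ℂ, w ∈ Q.roots.toFinset ↔ Q.eval w = 0 := by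
    intro w
    rw [Multiset.mem_toFinset, Polynomial.mem_roots hQ]
    rfl
  have hβroot : Q.eval β = 0 := (hmem_iff β).1 hβmem
  have hγroot : Q.eval γ = 0 := (hmem_iff γ).1 hγmem
  have hk0 : k ≠ 0 := by omega
  -- max root is -1
  have hβ : β = -1 := by
    have hQβ1 : Q.eval (β + 1) ≠ 0 := by
      intro h
      have := hβmax (β+1) ((hmem_iff _).2 h)
      simp [Complex.add_re] at this
      linarith
    have hDβ : D.eval β ≠ 0 := by
      rw [hDdef]
      simp only [Polynomial.eval_sub, Polynomial.eval_mul]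
      rw [evalQ₁, hβroot, mul_zero, sub_zero]
      exact mul_ne_zero (hnocommon β hβroot) hQβ1
    have := congrArg (Polynomial.eval β) hid
    simp only [Polynomial.eval_mul, Polynomial.eval_pow, Polynomial.eval_add,
      Polynomial.eval_X, Polynomial.eval_C] at this
    rw [hβroot, zero_mul] at this
    have hpow : (β + 1) ^ k = 0 := by
      rcases mul_eq_zero.1 this with h | h
      · exact absurd h hDβ
      · exact h
    have := pow_eq_zero_iff hk0 |>.1 hpow
    linear_combination this
  -- min root: γ = 0
  have hγ : γ = 0 := by
    set δ := γ - 1 with hδ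
    have hQδ : Q.eval δ ≠ 0 := by
      intro h
      have := hγmin δ ((hmem_iff _).2 h)
      simp [hδ, Complex.sub_re] at this
      linarith
    have hQ₁δ : Q₁.eval δ = 0 := by rw [evalQ₁]; simpa [hδ] using hγroot
    have hDδ : D.eval δ ≠ 0 := by
      rw [hDdef]
      simp only [Polynomial.eval_sub, Polynomial.eval_mul]
      rw [hQ₁δ, mul_zero, zero_sub, neg_ne_zero, evalP₁]
      have : δ + 1 = γ := by rw [hδ]; ring
      rw [this]
      exact mul_ne_zero (hnocommon γ hγroot) hQδ
    have := congrArg (Polynomial.eval δ) hid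
    simp only [Polynomial.eval_mul, Polynomial.eval_pow, Polynomial.eval_add,
      Polynomial.eval_X, Polynomial.eval_C] at this
    rw [hQ₁δ, mul_zero] at this
    have hpow : (δ + 1) ^ k = 0 := by
      rcases mul_eq_zero.1 this with h | h
      · exact absurd h hDδ
      · exact h
    have hδ1 : δ + 1 = 0 := pow_eq_zero_iff hk0 |>.1 hpow
    have : γ = 0 := by rw [hδ] at hδ1; linear_combination hδ1
    exact this
  have := hγmin β hβmem
  rw [hγ, hβ] at this
  norm_num at this

lemma comp_translate_ne_zero {Q : Polynomial ℂ} (hQ : Q ≠ 0) (a : ℂ) :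
    Q.comp (X + C a) ≠ 0 := by
  intro h
  apply hQ
  apply Polynomial.funext
  intro w
  have := congrArg (Polynomial.eval (w - a)) h
  rw [Polynomial.eval_comp] at this
  simpa using this

lemma ofReal_add_one_ne_zero (x : ℝ) (hx : 0 ≤ x) : ((x:ℂ) + 1) ≠ 0 := by
  intro h
  have := congrArg Complex.re h
  simp at this
  linarith

lemma key (r : ℕ) : ∀ c : Fin (r+1) → ℕ, (∀ i, 1 ≤ c i) → 2 ≤ c 0 →
    ∀ P Q : Polynomial ℂ, Q ≠ 0 →
    ¬ (∀ᶠ x : ℝ in atTop, He' (r+1) c (x:ℂ) = P.eval (x:ℂ) / Q.eval (x:ℂ)) := by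
  have hshift : Tendsto (fun x : ℝ => x + 1) atTop atTop :=
    tendsto_atTop_add_const_right atTop 1 tendsto_id
  induction r with
  | zero =>
    intro c h1 h2 P Q hQ H
    set k := c 0 with hk
    -- reduce to coprime
    set g := GCDMonoid.gcd P Q with hg
    have hgne : g ≠ 0 := gcd_ne_zero_of_right hQ
    set P' := P / g with hP'
    set Q' := Q / g with hQ'
    have hco : IsCoprime P' Q' := isCoprime_div_gcd_div_gcd hQ
    have hPfac : g * P' = P := EuclideanDomain.mul_div_cancel' hgne (gcd_dvd_left P Q)
    have hQfac : g * Q' = Q := EuclideanDomain.mul_div_cancel' hgne (gcd_dvd_right P Q)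
    have hQ'0 : Q' ≠ 0 := by
      intro h
      rw [h, mul_zero] at hQfac
      exact hQ hQfac.symm
    have hdiv : ∀ w : ℂ, Q.eval w ≠ 0 →
        P.eval w / Q.eval w = P'.eval w / Q'.eval w := by
      intro w hw
      rw [← hPfac, ← hQfac, Polynomial.eval_mul, Polynomial.eval_mul]
      have hgw : g.eval w ≠ 0 := by
        intro h
        rw [← hQfac, Polynomial.eval_mul, h, zero_mul] at hw
        exact hw rfl
      rw [mul_div_mul_left _ _ hgw]
    set Q₁ := Q'.comp (X + C 1) with hQ₁
    set P₁ := P'.comp (X + C 1) with hP₁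
    apply no_translation_identity k h2 P' Q' hQ'0 hco
    apply poly_eq_of_eventually
    have Hx1 := hshift.eventually H
    have hQne := eventually_eval_ne_zero Q hQ
    have hQne1 := hshift.eventually (eventually_eval_ne_zero Q hQ)
    filter_upwards [H, Hx1, hQne, hQne1, eventually_ge_atTop (0:ℝ)] with x hH hH1 hQx hQx1 hx
    have hfe := He'_FE 0 c h1 h2 x hx
    rw [He'_zero_eq] at hfe
    have hcast : ((x + 1 : ℝ) : ℂ) = (x:ℂ) + 1 := by push_cast; ring
    rw [hcast] at hH1 hQx1
    have hx1 : ((x:ℂ) + 1) ≠ 0 := ofReal_add_one_ne_zero x hx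
    have hQ'x : Q'.eval (x:ℂ) ≠ 0 := by
      intro h
      rw [← hQfac, Polynomial.eval_mul, h, mul_zero] at hQx
      exact hQx rfl
    have hQ'x1 : Q'.eval ((x:ℂ)+1) ≠ 0 := by
      intro h
      rw [← hQfac, Polynomial.eval_mul, h, mul_zero] at hQx1
      exact hQx1 rfl
    have heq : P'.eval (x:ℂ) / Q'.eval (x:ℂ) =
        P'.eval ((x:ℂ)+1) / Q'.eval ((x:ℂ)+1) + 1 * (1 / ((x:ℂ)+1) ^ (c (Fin.last 0))) := by
      rw [← hdiv _ hQx, ← hdiv _ hQx1, ← hH, ← hH1]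
      exact hfe
    have hlast : c (Fin.last 0) = k := rfl
    rw [hlast, one_mul] at heq
    -- evaluate the polynomials
    have e1 : ∀ w : ℂ, Q₁.eval w = Q'.eval (w+1) := by
      intro w; rw [hQ₁, Polynomial.eval_comp]; simp
    have e2 : ∀ w : ℂ, P₁.eval w = P'.eval (w+1) := by
      intro w; rw [hP₁, Polynomial.eval_comp]; simp
    simp only [Polynomial.eval_mul, Polynomial.eval_sub, Polynomial.eval_pow,
      Polynomial.eval_add, Polynomial.eval_X, Polynomial.eval_C, e1, e2, Polynomial.eval_comp]
    have hpow : ((x:ℂ)+1) ^ k ≠ 0 := pow_ne_zero _ hx1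
    field_simp at heq
    linear_combination heq
  | succ r ih =>
    intro c h1 h2 P Q hQ H
    set t := c (Fin.last (r+1)) with ht
    set c' : Fin (r+1) → ℕ := fun i => c i.castSucc with hc'
    have h1' : ∀ i, 1 ≤ c' i := fun i => h1 _
    have h2' : 2 ≤ c' 0 := by
      have : c' 0 = c 0 := by rw [hc']; norm_num
      rw [this]; exact h2
    set Q₁ := Q.comp (X + C 1) with hQ₁
    set P₁ := P.comp (X + C 1) with hP₁
    have hQ₁0 : Q₁ ≠ 0 := comp_translate_ne_zero hQ 1
    set P₂ := (P * Q₁ - P₁ * Q) * (X + C 1) ^ t with hP₂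
    set Q₂ := Q * Q₁ with hQ₂
    have hQ₂0 : Q₂ ≠ 0 := mul_ne_zero hQ hQ₁0
    set P₃ := P₂.comp (X - C 1) with hP₃
    set Q₃ := Q₂.comp (X - C 1) with hQ₃
    have hXsub : (X - C 1 : Polynomial ℂ) = X + C (-1) := by
      rw [map_neg, sub_eq_add_neg]
    have hQ₃0 : Q₃ ≠ 0 := by
      rw [hQ₃, hXsub]
      exact comp_translate_ne_zero hQ₂0 (-1)
    apply ih c' h1' h2' P₃ Q₃ hQ₃0
    have Hx1 := hshift.eventually H
    have hQne := eventually_eval_ne_zero Q hQ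
    have hQne1 := hshift.eventually (eventually_eval_ne_zero Q hQ)
    have Hmain : ∀ᶠ x : ℝ in atTop,
        He' (r+1) c' ((x:ℂ)+1) = P₂.eval (x:ℂ) / Q₂.eval (x:ℂ) := by
      filter_upwards [H, Hx1, hQne, hQne1, eventually_ge_atTop (0:ℝ)] with x hH hH1 hQx hQx1 hx
      have hfe := He'_FE (r+1) c h1 h2 x hx
      rw [show (fun i : Fin (r+1) => c i.castSucc) = c' from rfl, ← ht] at hfe
      have hcast : ((x + 1 : ℝ) : ℂ) = (x:ℂ) + 1 := by push_cast; ring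
      rw [hcast] at hH1 hQx1
      have hx1 : ((x:ℂ) + 1) ≠ 0 := ofReal_add_one_ne_zero x hx
      have hpow : ((x:ℂ)+1) ^ t ≠ 0 := pow_ne_zero _ hx1
      have e1 : ∀ w : ℂ, Q₁.eval w = Q.eval (w+1) := by
        intro w; rw [hQ₁, Polynomial.eval_comp]; simp
      have e2 : ∀ w : ℂ, P₁.eval w = P.eval (w+1) := by
        intro w; rw [hP₁, Polynomial.eval_comp]; simp
      have hsolve : He' (r+1) c' ((x:ℂ)+1) =
          (P.eval (x:ℂ) / Q.eval (x:ℂ) - P.eval ((x:ℂ)+1) / Q.eval ((x:ℂ)+1)) * ((x:ℂ)+1) ^ t := by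
        rw [← hH, ← hH1]
        rw [hfe]
        field_simp
        ring
      rw [hsolve]
      simp only [hP₂, hQ₂, Polynomial.eval_mul, Polynomial.eval_sub, Polynomial.eval_pow,
        Polynomial.eval_add, Polynomial.eval_X, Polynomial.eval_C, e1, e2]
      have hQx' : Q.eval ((x:ℂ)) ≠ 0 := hQx
      field_simp
    obtain ⟨M, hM⟩ := eventually_atTop.1 Hmain
    refine eventually_atTop.2 ⟨M+1, fun y hy => ?_⟩
    have hMy := hM (y-1) (by linarith)
    have hcast1 : ((y - 1 : ℝ) : ℂ) = (y:ℂ) - 1 := by push_cast; ring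
    rw [hcast1] at hMy
    have hcast2 : ((y:ℂ) - 1) + 1 = (y:ℂ) := by ring
    rw [hcast2] at hMy
    have e3 : P₃.eval (y:ℂ) = P₂.eval ((y:ℂ)-1) := by
      rw [hP₃, Polynomial.eval_comp]; simp
    have e4 : Q₃.eval (y:ℂ) = Q₂.eval ((y:ℂ)-1) := by
      rw [hQ₃, Polynomial.eval_comp]; simp
    rw [e3, e4]
    exact hMy

lemma He'_congr_len {r r' : ℕ} (h : r = r') (c : Fin r → ℕ) (z : ℂ) :
    He' r c z = He' r' (fun i => c (Fin.cast h.symm i)) z := by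
  subst h
  rfl

/-- no nonempty admissible Hurwitz multizeta function is a rational
function. -/
theorem hurwitzMultizeta_not_rational (s : List ℕ) (hr : s ≠ [])
    (h1 : ∀ k ∈ s, 1 ≤ k) (h2 : 2 ≤ s.head hr) :
    ¬ ∃ G : RatFunc ℂ, ∀ z : ℂ, InOmega z → Polynomial.eval z G.denom ≠ 0 →
      He s z = G.eval (RingHom.id ℂ) z := by
  rintro ⟨G, hG⟩
  obtain ⟨r, hlen⟩ : ∃ r, s.length = r + 1 :=
    ⟨s.length - 1, (Nat.succ_pred_eq_of_pos (List.length_pos_iff.2 hr)).symm⟩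
  set c : Fin (r+1) → ℕ := fun i => s.get (Fin.cast hlen.symm i) with hc
  have h1' : ∀ i, 1 ≤ c i := fun i => h1 _ (List.get_mem s _)
  have h2' : 2 ≤ c 0 := by
    have hh : c 0 = s.head hr := by
      rw [hc]
      simp only
      rw [List.get_eq_getElem, List.head_eq_getElem_zero hr]
      congr 1
    rw [hh]
    exact h2
  apply key r c h1' h2' G.num G.denom (RatFunc.denom_ne_zero G)
  have hHe : ∀ z : ℂ, He s z = He' (r+1) c z := by
    intro z
    rw [show He s z = He' s.length s.get z from rfl, He'_congr_len hlen]
  filter_upwards [eventually_gt_atTop (0:ℝ),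
    eventually_eval_ne_zero G.denom (RatFunc.denom_ne_zero G)] with x hx hden
  have hio : InOmega (x:ℂ) := by
    intro k hk
    have := congrArg Complex.re hk
    simp at this
    have hk0 : (0:ℝ) ≤ (k:ℝ) := Nat.cast_nonneg k
    linarith
  have hGx := hG (x:ℂ) hio hden
  rw [← hHe]
  rw [hGx]
  show RatFunc.eval (RingHom.id ℂ) (x:ℂ) G = _
  rw [RatFunc.eval]
  rfl
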